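/- Define Φ_c(x) := ∫_1^∞ exp(−ct²) xᵗ dt for c > 0 and x ≥ 0. Then there is a constant K depending only on c such that for all x ≥ 1: exp((log x)²/(4c)) · exp(−(log K)²/(4c)) ≤ Φ_c(x). -/

import Mathlib

open MeasureTheory

/-- The Young-type function Φ_c(x) = ∫_1^∞ exp(-ct²) xᵗ dt. -/
noncomputable def PhiC (c x : ℝ) : ℝ :=
  ∫ t in Set.Ioi (1 : ℝ), Real.exp (-c * t ^ 2) * x ^ t

/-- For every c > 0 there is a constant K (depending only on c) such that for all x ≥ 1,
exp((log x)²/(4c)) · exp(-(log K)²/(4c)) ≤ Φ_c(x). -/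
theorem stmt_14 (c : ℝ) (hc : 0 < c) :
    ∃ K : ℝ, 0 < K ∧ ∀ x : ℝ, 1 ≤ x →
      Real.exp ((Real.log x) ^ 2 / (4 * c)) * Real.exp (-(Real.log K) ^ 2 / (4 * c))
        ≤ PhiC c x := by
  refine ⟨Real.exp (4 * c), Real.exp_pos _, fun x hx => ?_⟩
  have hx0 : (0:ℝ) < x := lt_of_lt_of_le one_pos hx
  set L := Real.log x with hL
  have hL0 : 0 ≤ L := Real.log_nonneg hx
  set m := L / (2 * c) with hm
  have hm0 : 0 ≤ m := div_nonneg hL0 (by linarith)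
  set m' := max 1 m with hm'
  have key : ∀ t : ℝ, Real.exp (-c * t ^ 2) * x ^ t
      = Real.exp (L ^ 2 / (4 * c)) * Real.exp (-c * (t - m) ^ 2) := by
    intro t
    rw [Real.rpow_def_of_pos hx0, ← Real.exp_add, ← Real.exp_add, ← hL]
    congr 1
    rw [hm]
    field_simp
    ring
  have hInt : IntegrableOn (fun t => Real.exp (-c * (t - m) ^ 2)) (Set.Ioi (1:ℝ)) :=
    ((integrable_exp_neg_mul_sq hc).comp_sub_right m).integrableOn
  have hsub : Set.Ioc m' (m' + 1) ⊆ Set.Ioi (1:ℝ) :=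
    fun t ht => lt_of_le_of_lt (le_max_left 1 m) ht.1
  have h1 : ∫ t in Set.Ioc m' (m' + 1), Real.exp (-c * (t - m) ^ 2)
      ≤ ∫ t in Set.Ioi (1:ℝ), Real.exp (-c * (t - m) ^ 2) := by
    apply setIntegral_mono_set hInt
    · exact Filter.Eventually.of_forall fun t => (Real.exp_pos _).le
    · exact HasSubset.Subset.eventuallyLE hsub
  have h2 : Real.exp (-(4 * c)) * (volume (Set.Ioc m' (m' + 1))).toReal
      ≤ ∫ t in Set.Ioc m' (m' + 1), Real.exp (-c * (t - m) ^ 2) := by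
    apply setIntegral_ge_of_const_le_real measurableSet_Ioc (by simp) ?_ (hInt.mono_set hsub)
    intro t ht
    apply Real.exp_le_exp.2
    have hmt : m ≤ t := le_of_lt (lt_of_le_of_lt (le_max_right 1 m) ht.1)
    have htm : t - m ≤ 2 := by
      have : m' ≤ m + 1 := max_le (by linarith) (by linarith)
      have := ht.2
      linarith
    have hsq : (t - m) ^ 2 ≤ 4 := by nlinarith [sub_nonneg.2 hmt]
    nlinarith [mul_le_mul_of_nonneg_left hsq hc.le]
  have hvol : (volume (Set.Ioc m' (m' + 1))).toReal = 1 := by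
    simp [Real.volume_Ioc]
  rw [hvol, mul_one] at h2
  have hPhi : PhiC c x
      = Real.exp (L ^ 2 / (4 * c)) * ∫ t in Set.Ioi (1:ℝ), Real.exp (-c * (t - m) ^ 2) := by
    unfold PhiC
    simp_rw [key]
    rw [integral_const_mul]
  rw [hPhi]
  have hlogK : Real.log (Real.exp (4 * c)) = 4 * c := Real.log_exp _
  rw [hlogK]
  have : -(4 * c) ^ 2 / (4 * c) = -(4 * c) := by
    field_simp
  rw [this]
  exact mul_le_mul_of_nonneg_left (h2.trans h1) (Real.exp_pos _).le
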